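/- Let m be a positive integer and θ, φ, γ : Fin m → ℝ. Let E = blockdiag_j(X_{0,2}) (a 3m×3m matrix) and let I denote the 3m×3m identity. Then for a = Y02 and also for a = Z02: diag₃(D_a(θ), D_a(θ), D_a(θ)) · diag₃(I, E, I) · diag₃(D_a(φ), D_a(φ), D_a(φ)) · diag₃(I, E, I) · diag₃(I, I, E) · diag₃(D_a(γ), D_a(γ), D_a(γ)) · diag₃(I, I, E) = diag₃(D_a(θ+φ+γ), D_a(θ−φ+γ), D_a(θ+φ−γ)), where θ±φ±γ denotes the componentwise combination of the angle families. -/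

import Mathlib

open Matrix

/-- `e^{ι x}` for a real angle `x`. -/
noncomputable def eC (x : ℝ) : ℂ := Complex.exp (x * Complex.I)

noncomputable def RX01 (θ : ℝ) : Matrix (Fin 3) (Fin 3) ℂ :=
  !![(Real.cos θ : ℂ), (Real.sin θ : ℂ) * Complex.I, 0;
     (Real.sin θ : ℂ) * Complex.I, (Real.cos θ : ℂ), 0;
     0, 0, 1]

noncomputable def RX12 (θ : ℝ) : Matrix (Fin 3) (Fin 3) ℂ :=
  !![1, 0, 0;
     0, (Real.cos θ : ℂ), (Real.sin θ : ℂ) * Complex.I;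
     0, (Real.sin θ : ℂ) * Complex.I, (Real.cos θ : ℂ)]

noncomputable def RX02 (θ : ℝ) : Matrix (Fin 3) (Fin 3) ℂ :=
  !![(Real.cos θ : ℂ), 0, (Real.sin θ : ℂ) * Complex.I;
     0, 1, 0;
     (Real.sin θ : ℂ) * Complex.I, 0, (Real.cos θ : ℂ)]

noncomputable def RY01 (θ : ℝ) : Matrix (Fin 3) (Fin 3) ℂ :=
  !![(Real.cos θ : ℂ), (Real.sin θ : ℂ), 0;
     (-Real.sin θ : ℂ), (Real.cos θ : ℂ), 0;
     0, 0, 1]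

noncomputable def RY12 (θ : ℝ) : Matrix (Fin 3) (Fin 3) ℂ :=
  !![1, 0, 0;
     0, (Real.cos θ : ℂ), (Real.sin θ : ℂ);
     0, (-Real.sin θ : ℂ), (Real.cos θ : ℂ)]

noncomputable def RY02 (θ : ℝ) : Matrix (Fin 3) (Fin 3) ℂ :=
  !![(Real.cos θ : ℂ), 0, (Real.sin θ : ℂ);
     0, 1, 0;
     (-Real.sin θ : ℂ), 0, (Real.cos θ : ℂ)]

noncomputable def RZ01 (θ : ℝ) : Matrix (Fin 3) (Fin 3) ℂ :=
  !![eC θ, 0, 0; 0, eC (-θ), 0; 0, 0, 1]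

noncomputable def RZ12 (θ : ℝ) : Matrix (Fin 3) (Fin 3) ℂ :=
  !![1, 0, 0; 0, eC θ, 0; 0, 0, eC (-θ)]

noncomputable def RZ02 (θ : ℝ)  : Matrix (Fin 3) (Fin 3) ℂ :=
  !![eC θ, 0, 0; 0, 1, 0; 0, 0, eC (-θ)]

/-- Block diagonal matrix built from a one-qutrit gate family `R` applied to angles `α`. -/
noncomputable def D {m : ℕ} (R : ℝ → Matrix (Fin 3) (Fin 3) ℂ) (α : Fin m → ℝ) :
    Matrix (Fin 3 × Fin m) (Fin 3 × Fin m) ℂ :=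
  Matrix.blockDiagonal fun j => R (α j)

/-- Block diagonal matrix with three equal-size diagonal blocks. -/
noncomputable def diag3 {I : Type*} [DecidableEq I] (A B C : Matrix I I ℂ) :
    Matrix (I × Fin 3) (I × Fin 3) ℂ :=
  Matrix.blockDiagonal ![A, B, C]

noncomputable def X01 : Matrix (Fin 3) (Fin 3) ℂ := !![0, 1, 0; 1, 0, 0; 0, 0, 1]
noncomputable def X12 : Matrix (Fin 3) (Fin 3) ℂ := !![1, 0, 0; 0, 0, 1; 0, 1, 0]
noncomputable def X02 : Matrix (Fin 3) (Fin 3) ℂ := !![0, 0, 1; 0, 1, 0; 1, 0, 0]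
noncomputable def Xp1 : Matrix (Fin 3) (Fin 3) ℂ := !![0, 0, 1; 1, 0, 0; 0, 1, 0]
noncomputable def Xp2 : Matrix (Fin 3) (Fin 3) ℂ := !![0, 1, 0; 0, 0, 1; 1, 0, 0]

lemma RY02_mul (a b : ℝ) : RY02 a * RY02 b = RY02 (a + b) := by
  ext i j
  fin_cases i <;> fin_cases j <;>
    simp [RY02, Matrix.mul_apply, Fin.sum_univ_three, Matrix.vecHead, Matrix.vecTail, Real.cos_add, Real.sin_add] <;> ring

lemma RZ02_mul (a b : ℝ) : RZ02 a * RZ02 b = RZ02 (a + b) := by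
  ext i j
  fin_cases i <;> fin_cases j <;>
    simp [RZ02, eC, Matrix.mul_apply, Fin.sum_univ_three, Matrix.vecHead, Matrix.vecTail, ← Complex.exp_add] <;>
    ring_nf

lemma X_RY02_X (b : ℝ) : X02 * RY02 b * X02 = RY02 (-b) := by
  ext i j
  fin_cases i <;> fin_cases j <;>
    simp [RY02, X02, Matrix.mul_apply, Fin.sum_univ_three, Matrix.vecHead, Matrix.vecTail]

lemma X_RZ02_X (b : ℝ) : X02 * RZ02 b * X02 = RZ02 (-b) := by
  ext i j
  fin_cases i <;> fin_cases j <;>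
    simp [RZ02, X02, Matrix.mul_apply, Fin.sum_univ_three, Matrix.vecHead, Matrix.vecTail]

lemma key {m : ℕ} (R : ℝ → Matrix (Fin 3) (Fin 3) ℂ)
    (hmul : ∀ a b, R a * R b = R (a + b))
    (hx : ∀ b, X02 * R b * X02 = R (-b)) (θ φ γ : Fin m → ℝ) :
    diag3 (D R θ) (D R θ) (D R θ) *
      diag3 (1 : Matrix (Fin 3 × Fin m) (Fin 3 × Fin m) ℂ)
        (Matrix.blockDiagonal fun _ : Fin m => X02) 1 *
      diag3 (D R φ) (D R φ) (D R φ) *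
      diag3 (1 : Matrix (Fin 3 × Fin m) (Fin 3 × Fin m) ℂ)
        (Matrix.blockDiagonal fun _ : Fin m => X02) 1 *
      diag3 (1 : Matrix (Fin 3 × Fin m) (Fin 3 × Fin m) ℂ) 1
        (Matrix.blockDiagonal fun _ : Fin m => X02) *
      diag3 (D R γ) (D R γ) (D R γ) *
      diag3 (1 : Matrix (Fin 3 × Fin m) (Fin 3 × Fin m) ℂ) 1
        (Matrix.blockDiagonal fun _ : Fin m => X02) =
      diag3 (D R (fun j => θ j + φ j + γ j)) (D R (fun j => θ j - φ j + γ j))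
        (D R (fun j => θ j + φ j - γ j)) := by
  simp only [diag3, D, ← Matrix.blockDiagonal_mul]
  refine congrArg _ (funext fun k => ?_)
  fin_cases k
  · simp only [Fin.zero_eta, Matrix.cons_val_zero, one_mul, mul_one,
      ← Matrix.blockDiagonal_mul]
    refine congrArg _ (funext fun j => ?_)
    rw [hmul, hmul]
  · simp only [Fin.mk_one, Matrix.cons_val_one, Matrix.head_cons, Matrix.cons_val_zero, one_mul, mul_one,
      ← Matrix.blockDiagonal_mul]
    refine congrArg _ (funext fun j => ?_)
    have h : R (θ j) * X02 * R (φ j) * X02 * R (γ j)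
        = R (θ j) * (X02 * R (φ j) * X02) * R (γ j) := by
      simp only [mul_assoc]
    rw [h, hx, hmul, hmul]
    ring_nf
  · simp only [Fin.reduceFinMk, Matrix.cons_val_two, Matrix.tail_cons, Matrix.head_cons,
      one_mul, mul_one, ← Matrix.blockDiagonal_mul]
    refine congrArg _ (funext fun j => ?_)
    have h : R (θ j) * R (φ j) * X02 * R (γ j) * X02
        = R (θ j) * R (φ j) * (X02 * R (γ j) * X02) := by
      simp only [mul_assoc]
    rw [h, hx, hmul, hmul]
    ring_nf

theorem stmt10 (m : ℕ) (hm : 0 < m) (θ φ γ : Fin m → ℝ) :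
    let E : Matrix (Fin 3 × Fin m) (Fin 3 × Fin m) ℂ :=
      Matrix.blockDiagonal fun _ : Fin m => X02
    let I : Matrix (Fin 3 × Fin m) (Fin 3 × Fin m) ℂ := 1
    diag3 (D RY02 θ) (D RY02 θ) (D RY02 θ) * diag3 I E I *
      diag3 (D RY02 φ) (D RY02 φ) (D RY02 φ) * diag3 I E I * diag3 I I E *
      diag3 (D RY02 γ) (D RY02 γ) (D RY02 γ) * diag3 I I E =
      diag3 (D RY02 (fun j => θ j + φ j + γ j)) (D RY02 (fun j => θ j - φ j + γ j))
        (D RY02 (fun j => θ j + φ j - γ j)) ∧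
    diag3 (D RZ02 θ) (D RZ02 θ) (D RZ02 θ) * diag3 I E I *
      diag3 (D RZ02 φ) (D RZ02 φ) (D RZ02 φ) * diag3 I E I * diag3 I I E *
      diag3 (D RZ02 γ) (D RZ02 γ) (D RZ02 γ) * diag3 I I E =
      diag3 (D RZ02 (fun j => θ j + φ j + γ j)) (D RZ02 (fun j => θ j - φ j + γ j))
        (D RZ02 (fun j => θ j + φ j - γ j)) := by
  intro E I
  exact ⟨key RY02 RY02_mul X_RY02_X θ φ γ, key RZ02 RZ02_mul X_RZ02_X θ φ γ⟩
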